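/- Boolean low-rank approximation under the disjointness mask: Let n = 2^m and identify each i ∈ [n] with its binary representation x(i) ∈ {0,1}^m. Let A ∈ {0,1}^{n×n} and let W ∈ {0,1}^{n×n} be defined by W_{i,j} = 0 if x(i) and x(j) share no common 1-coordinate (i.e., are disjoint), and W_{i,j} = 1 otherwise. Then for every k' ≥ 8k·m, if U ∈ {0,1}^{n×k'} and V ∈ {0,1}^{k'×n} satisfy ‖A ∘ W − U·V‖₀ ≤ (min over Û ∈ {0,1}^{n×k'}, V̂ ∈ {0,1}^{k'×n} of ‖A ∘ W − Û·V̂‖₀) + Δ for some Δ ≥ 0, then ‖(A − U·V) ∘ W‖₀ ≤ 8m·OPT + Δ, where OPT = min over Û ∈ {0,1}^{n×k}, V̂ ∈ {0,1}^{k×n} of ‖(A − Û·V̂) ∘ W‖₀. -/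
import Mathlib


open BigOperators

/-- Boolean matrix product over an index type `α`:
`(U·V)_{i,j} = 1` iff `∃ l, U_{i,l} = 1 ∧ V_{l,j} = 1`. -/
def bMul {α : Type*} {k : ℕ} (U : α → Fin k → Bool) (V : Fin k → α → Bool) :
    α → α → Bool :=
  fun i j => decide (∃ l, U i l = true ∧ V l j = true)

/-- Entrywise AND (Hadamard product of Boolean matrices). -/
def bHad {α : Type*} (M N : α → α → Bool) : α → α → Bool :=
  fun i j => M i j && N i j

/-- `‖M − N‖₀`: the number of entries where the Boolean matrices `M` and `N` differ. -/
def l0diff {α : Type*} [Fintype α] (M N : α → α → Bool) : ℕ :=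
  (Finset.univ.filter fun p : α × α => M p.1 p.2 ≠ N p.1 p.2).card

/-- `‖(M − N) ∘ W‖₀`: the number of entries in the support of `W` where `M` and `N` differ. -/
def l0maskdiff {α : Type*} [Fintype α] (W M N : α → α → Bool) : ℕ :=
  (Finset.univ.filter fun p : α × α =>
    W p.1 p.2 = true ∧ M p.1 p.2 ≠ N p.1 p.2).card

/-- Boolean low-rank approximation under the disjointness mask.
Here `n = 2^m` and each `i ∈ [n]` is identified with its binary representation,
i.e. matrices are indexed by `Fin m → Bool ≃ {0,1}^m`; `W x y = 0` iff `x` and `y`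
are disjoint. -/
theorem stmt13
    {m k k' : ℕ}
    (A W : (Fin m → Bool) → (Fin m → Bool) → Bool)
    (hW : ∀ x y : Fin m → Bool, W x y = true ↔ ∃ l, x l = true ∧ y l = true)
    (hk' : 8 * k * m ≤ k') (Δ : ℕ)
    (U : (Fin m → Bool) → Fin k' → Bool) (V : Fin k' → (Fin m → Bool) → Bool)
    (hUV : l0diff (bHad A W) (bMul U V) ≤
      sInf {x : ℕ | ∃ (U' : (Fin m → Bool) → Fin k' → Bool)
          (V' : Fin k' → (Fin m → Bool) → Bool),
        x = l0diff (bHad A W) (bMul U' V')} + Δ) :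
    l0maskdiff W A (bMul U V) ≤
      8 * m * sInf {x : ℕ | ∃ (U' : (Fin m → Bool) → Fin k → Bool)
          (V' : Fin k → (Fin m → Bool) → Bool),
        x = l0maskdiff W A (bMul U' V')} + Δ := by
  classical
  rcases Nat.eq_zero_or_pos m with hm | hm
  · subst hm
    have hzero : l0maskdiff W A (bMul U V) = 0 := by
      apply Finset.card_eq_zero.mpr
      rw [Finset.filter_eq_empty_iff]
      intro p _
      rintro ⟨hWp, _⟩
      obtain ⟨l, -, -⟩ := (hW p.1 p.2).mp hWp
      exact absurd l.2 (by simp)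
    simp [hzero]
  · -- main case: m ≥ 1
    set S : Set ℕ := {x : ℕ | ∃ (U' : (Fin m → Bool) → Fin k → Bool)
          (V' : Fin k → (Fin m → Bool) → Bool),
        x = l0maskdiff W A (bMul U' V')} with hS
    have hne : S.Nonempty :=
      ⟨_, (fun _ _ => false), (fun _ _ => false), rfl⟩
    obtain ⟨Uh, Vh, hopt⟩ := Nat.sInf_mem hne
    have hkm : k * m ≤ k' := by
      have h8 : 8 * (k * m) ≤ k' := by rw [← mul_assoc]; exact hk'
      exact le_trans (Nat.le_mul_of_pos_left _ (by norm_num)) h8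
    -- build a rank-k' factorization of (bMul Uh Vh) ∘ W
    set U' : (Fin m → Bool) → Fin k' → Bool := fun x j =>
      if h : (j : ℕ) < k * m then
        let p := finProdFinEquiv.symm (⟨(j : ℕ), h⟩ : Fin (k * m))
        Uh x p.1 && x p.2
      else false with hU'
    set V' : Fin k' → (Fin m → Bool) → Bool := fun j y =>
      if h : (j : ℕ) < k * m then
        let p := finProdFinEquiv.symm (⟨(j : ℕ), h⟩ : Fin (k * m))
        Vh p.1 y && y p.2
      else false with hV'
    have hmul : ∀ x y, bMul U' V' x y = (bMul Uh Vh x y && W x y) := by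
      intro x y
      rcases Bool.eq_false_or_eq_true (bMul U' V' x y) with h | h
      case inr => -- bMul U' V' x y = false
        rw [h]
        symm
        rw [Bool.and_eq_false_iff]
        by_contra hc
        push_neg at hc
        obtain ⟨h1, h2⟩ := hc
        have h1' : bMul Uh Vh x y = true := Bool.ne_false_iff.mp h1
        have h2' : W x y = true := Bool.ne_false_iff.mp h2
        obtain ⟨l, hl1, hl2⟩ := (of_decide_eq_true h1' : ∃ l, Uh x l = true ∧ Vh l y = true)
        obtain ⟨t, ht1, ht2⟩ := (hW x y).mp h2'
        -- the index
        set q : Fin (k * m) := finProdFinEquiv (l, t) with hq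
        set j : Fin k' := Fin.castLE hkm q with hj
        have hjlt : (j : ℕ) < k * m := by
          simp only [hj, Fin.coe_castLE]; exact q.2
        have hqback : (⟨(j : ℕ), hjlt⟩ : Fin (k * m)) = q := by
          apply Fin.ext; simp [hj]
        have hU'j : U' x j = true := by
          rw [hU']
          simp only [dif_pos hjlt, hqback, hq, Equiv.symm_apply_apply]
          simp [hl1, ht1]
        have hV'j : V' j y = true := by
          rw [hV']
          simp only [dif_pos hjlt, hqback, hq, Equiv.symm_apply_apply]
          simp [hl2, ht2]
        have : bMul U' V' x y = true := decide_eq_true ⟨j, hU'j, hV'j⟩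
        rw [h] at this; exact Bool.false_ne_true this
      case inl => -- bMul U' V' x y = true
        rw [h]
        obtain ⟨j, hj1, hj2⟩ := (of_decide_eq_true h : ∃ j, U' x j = true ∧ V' j y = true)
        rw [hU'] at hj1; rw [hV'] at hj2
        by_cases hjlt : (j : ℕ) < k * m
        · simp only [dif_pos hjlt] at hj1 hj2
          set p := finProdFinEquiv.symm (⟨(j : ℕ), hjlt⟩ : Fin (k * m))
          simp only [Bool.and_eq_true] at hj1 hj2
          have hB : bMul Uh Vh x y = true := decide_eq_true ⟨p.1, hj1.1, hj2.1⟩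
          have hWxy : W x y = true := (hW x y).mpr ⟨p.2, hj1.2, hj2.2⟩
          rw [hB, hWxy]; rfl
        · simp only [dif_neg hjlt] at hj1
          exact absurd hj1 Bool.false_ne_true
    have hcount : l0diff (bHad A W) (bMul U' V') = l0maskdiff W A (bMul Uh Vh) := by
      unfold l0diff l0maskdiff
      congr 1
      apply Finset.filter_congr
      intro p _
      rw [hmul p.1 p.2]
      unfold bHad
      cases hw : W p.1 p.2 <;> simp
    have h1 : l0maskdiff W A (bMul U V) ≤ l0diff (bHad A W) (bMul U V) := by
      apply Finset.card_le_card
      intro p hp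
      simp only [Finset.mem_filter, Finset.mem_univ, true_and] at hp ⊢
      obtain ⟨hw, hne'⟩ := hp
      unfold bHad
      rw [hw, Bool.and_true]
      exact hne'
    have h2 : sInf {x : ℕ | ∃ (U' : (Fin m → Bool) → Fin k' → Bool)
          (V' : Fin k' → (Fin m → Bool) → Bool),
        x = l0diff (bHad A W) (bMul U' V')} ≤ sInf S := by
      rw [hopt]
      rw [← hcount]
      exact Nat.sInf_le ⟨U', V', rfl⟩
    have h3 : sInf S ≤ 8 * m * sInf S :=
      Nat.le_mul_of_pos_left _ (by omega)
    calc l0maskdiff W A (bMul U V) ≤ l0diff (bHad A W) (bMul U V) := h1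
      _ ≤ sInf {x : ℕ | ∃ (U' : (Fin m → Bool) → Fin k' → Bool)
          (V' : Fin k' → (Fin m → Bool) → Bool),
        x = l0diff (bHad A W) (bMul U' V')} + Δ := hUV
      _ ≤ sInf S + Δ := by omega
      _ ≤ 8 * m * sInf S + Δ := by omega
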